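/- For every ε ∈ (0,1), the domain D_ε is strongly linearly convex: its defining function r(s,p) = |s - conj(s)p|² + ε - (1-|p|²)² satisfies, at every boundary point (s₀,p₀) and every nonzero complex tangent vector (X₁,X₂), the inequality Σ_{j,k} r_{z_j z̄_k}(s₀,p₀) X_j X̄_k > |Σ_{j,k} r_{z_j z_k}(s₀,p₀) X_j X_k|. -/

import Mathlib

open Complex

def Dset (ε : ℝ) : Set (ℂ × ℂ) :=
  {sp | Real.sqrt (‖sp.1 - (starRingEnd ℂ) sp.1 * sp.2‖ ^ 2 + ε)
      + ‖sp.2‖ ^ 2 < 1}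

noncomputable def rdef (ε : ℝ) (sp : ℂ × ℂ) : ℝ :=
  ‖sp.1 - (starRingEnd ℂ) sp.1 * sp.2‖ ^ 2 + ε
    - (1 - ‖sp.2‖ ^ 2) ^ 2

/-- Wirtinger derivative `∂f/∂λ` for `f : ℂ → ℂ`. -/
noncomputable def wd (f : ℂ → ℂ) (z : ℂ) : ℂ :=
  (fderiv ℝ f z 1 - Complex.I * fderiv ℝ f z Complex.I) / 2

/-- Conjugate Wirtinger derivative `∂f/∂λ̄`. -/
noncomputable def wdBar (f : ℂ → ℂ) (z : ℂ) : ℂ :=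
  (fderiv ℝ f z 1 + Complex.I * fderiv ℝ f z Complex.I) / 2

/-- Wirtinger derivative in the `j`-th variable of `f : ℂ × ℂ → ℂ` (`j = 1, 2`). -/
noncomputable def wd1 (f : ℂ × ℂ → ℂ) (z : ℂ × ℂ) : ℂ := wd (fun w => f (w, z.2)) z.1
noncomputable def wd2 (f : ℂ × ℂ → ℂ) (z : ℂ × ℂ) : ℂ := wd (fun w => f (z.1, w)) z.2
noncomputable def wdBar1 (f : ℂ × ℂ → ℂ) (z : ℂ × ℂ) : ℂ := wdBar (fun w => f (w, z.2)) z.1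
noncomputable def wdBar2 (f : ℂ × ℂ → ℂ) (z : ℂ × ℂ) : ℂ := wdBar (fun w => f (z.1, w)) z.2

/-- The complexified defining function. -/
noncomputable def rC (ε : ℝ) (sp : ℂ × ℂ) : ℂ := (rdef ε sp : ℂ)

/-! ### Auxiliary Wirtinger calculus -/

def WP (f : ℂ → ℂ) (z a b : ℂ) : Prop :=
  ∃ L : ℂ →L[ℝ] ℂ, HasFDerivAt f L z ∧ L 1 = a + b ∧ L Complex.I = a * Complex.I - b * Complex.I

theorem WP.wd_eq {f z a b} (h : WP f z a b) : wd f z = a := by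
  obtain ⟨L, hL, h1, hI⟩ := h
  unfold wd
  rw [hL.fderiv, h1, hI]
  linear_combination ((b - a)/2) * Complex.I_sq

theorem WP.wdBar_eq {f z a b} (h : WP f z a b) : wdBar f z = b := by
  obtain ⟨L, hL, h1, hI⟩ := h
  unfold wdBar
  rw [hL.fderiv, h1, hI]
  linear_combination ((a - b)/2) * Complex.I_sq

theorem WP_id (z : ℂ) : WP (fun w => w) z 1 0 :=
  ⟨ContinuousLinearMap.id ℝ ℂ, hasFDerivAt_id z, by simp, by simp⟩

theorem WP_const (z c : ℂ) : WP (fun _ => c) z 0 0 :=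
  ⟨0, hasFDerivAt_const c z, by simp, by simp⟩

theorem WP_conj (z : ℂ) : WP (fun w => (starRingEnd ℂ) w) z 0 1 :=
  ⟨Complex.conjCLE.toContinuousLinearMap, Complex.conjCLE.hasFDerivAt, by simp, by simp⟩

theorem WP.add {f g z a b a' b'} (hf : WP f z a b) (hg : WP g z a' b') :
    WP (fun w => f w + g w) z (a + a') (b + b') := by
  obtain ⟨L, hL, h1, hI⟩ := hf; obtain ⟨M, hM, m1, mI⟩ := hg
  exact ⟨L + M, hL.add hM, by simp [h1, m1]; ring, by simp [hI, mI]; ring⟩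

theorem WP.sub {f g z a b a' b'} (hf : WP f z a b) (hg : WP g z a' b') :
    WP (fun w => f w - g w) z (a - a') (b - b') := by
  obtain ⟨L, hL, h1, hI⟩ := hf; obtain ⟨M, hM, m1, mI⟩ := hg
  exact ⟨L - M, hL.sub hM, by simp [h1, m1]; ring, by simp [hI, mI]; ring⟩

theorem WP.neg {f z a b} (hf : WP f z a b) : WP (fun w => -f w) z (-a) (-b) := by
  obtain ⟨L, hL, h1, hI⟩ := hf
  exact ⟨-L, hL.neg, by simp [h1]; ring, by simp [hI]; ring⟩

theorem WP.mul {f g z a b a' b'} (hf : WP f z a b) (hg : WP g z a' b') :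
    WP (fun w => f w * g w) z (f z * a' + g z * a) (f z * b' + g z * b) := by
  obtain ⟨L, hL, h1, hI⟩ := hf; obtain ⟨M, hM, m1, mI⟩ := hg
  refine ⟨f z • M + g z • L, hL.mul hM, ?_, ?_⟩
  · simp [h1, m1, smul_eq_mul]; ring
  · simp [hI, mI, smul_eq_mul]; ring

theorem WP.congr_ab {f z a b a' b'} (h : WP f z a b) (ha : a = a') (hb : b = b') :
    WP f z a' b' := ha ▸ hb ▸ h

theorem WP.congr {f g : ℂ → ℂ} {z a b} (h : WP f z a b) (hfg : ∀ w, f w = g w) :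
    WP g z a b := (funext hfg : f = g) ▸ h

theorem WP.pow2 {f z a b} (hf : WP f z a b) :
    WP (fun w => f w ^ 2) z (2 * f z * a) (2 * f z * b) :=
  ((hf.mul hf).congr (fun w => (sq (f w)).symm)).congr_ab (by ring) (by ring)

theorem WP.mul_const {f z a b} (c : ℂ) (hf : WP f z a b) :
    WP (fun w => f w * c) z (a * c) (b * c) :=
  ((hf.mul (WP_const z c)).congr_ab (by ring) (by ring))

theorem WP.const_mul {f z a b} (c : ℂ) (hf : WP f z a b) :
    WP (fun w => c * f w) z (c * a) (c * b) :=
  (((WP_const z c).mul hf).congr_ab (by ring) (by ring))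

/-! ### Derivatives of the defining function -/

theorem rC_eq (ε : ℝ) (sp : ℂ × ℂ) :
    rC ε sp = (sp.1 - (starRingEnd ℂ) sp.1 * sp.2) *
        ((starRingEnd ℂ) sp.1 - sp.1 * (starRingEnd ℂ) sp.2)
      + (ε : ℂ) - (1 - sp.2 * (starRingEnd ℂ) sp.2) ^ 2 := by
  unfold rC rdef
  rw [Complex.sq_norm, Complex.sq_norm]
  push_cast
  rw [← Complex.mul_conj, ← Complex.mul_conj]
  simp only [map_mul, map_sub, Complex.conj_conj, map_one]

theorem WP_var1 (ε : ℝ) (s p : ℂ) :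
    WP (fun w => rC ε (w, p)) s
      ((starRingEnd ℂ) s - 2 * s * (starRingEnd ℂ) p
        + (starRingEnd ℂ) s * p * (starRingEnd ℂ) p)
      (s - 2 * (starRingEnd ℂ) s * p + s * p * (starRingEnd ℂ) p) := by
  have t1 : WP (fun w => w - (starRingEnd ℂ) w * p) s 1 (-p) :=
    ((WP_id s).sub ((WP_conj s).mul_const p)).congr_ab (by ring) (by ring)
  have t2 : WP (fun w => (starRingEnd ℂ) w - w * (starRingEnd ℂ) p) s
      (-(starRingEnd ℂ) p) 1 :=
    ((WP_conj s).sub ((WP_id s).mul_const ((starRingEnd ℂ) p))).congr_ab (by ring) (by ring)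
  have t3 := ((t1.mul t2).add (WP_const s (ε : ℂ))).sub
      (WP_const s ((1 - p * (starRingEnd ℂ) p) ^ 2))
  refine (t3.congr (fun w => (rC_eq ε (w, p)).symm)).congr_ab (by ring) (by ring)

theorem WP_var2 (ε : ℝ) (s p : ℂ) :
    WP (fun w => rC ε (s, w)) p
      (-(starRingEnd ℂ) s ^ 2 + s * (starRingEnd ℂ) s * (starRingEnd ℂ) p
        + 2 * (starRingEnd ℂ) p - 2 * p * (starRingEnd ℂ) p ^ 2)
      (-s ^ 2 + s * (starRingEnd ℂ) s * p + 2 * p - 2 * (starRingEnd ℂ) p * p ^ 2) := by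
  have t1 : WP (fun w => s - (starRingEnd ℂ) s * w) p (-(starRingEnd ℂ) s) 0 :=
    ((WP_const p s).sub (((WP_id p)).const_mul ((starRingEnd ℂ) s))).congr_ab
      (by ring) (by ring)
  have t2 : WP (fun w => (starRingEnd ℂ) s - s * (starRingEnd ℂ) w) p 0 (-s) :=
    ((WP_const p ((starRingEnd ℂ) s)).sub (((WP_conj p)).const_mul s)).congr_ab
      (by ring) (by ring)
  have t4 : WP (fun w => (1 - w * (starRingEnd ℂ) w) ^ 2) p
      (2 * (1 - p * (starRingEnd ℂ) p) * (-(starRingEnd ℂ) p))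
      (2 * (1 - p * (starRingEnd ℂ) p) * (-p)) := by
    have inner : WP (fun w => 1 - w * (starRingEnd ℂ) w) p
        (-(starRingEnd ℂ) p) (-p) :=
      ((WP_const p 1).sub ((WP_id p).mul (WP_conj p))).congr_ab (by ring) (by ring)
    exact inner.pow2.congr_ab (by ring) (by ring)
  have t3 := ((t1.mul t2).add (WP_const p (ε : ℂ))).sub t4
  refine (t3.congr (fun w => (rC_eq ε (s, w)).symm)).congr_ab (by ring) (by ring)

theorem wd1_rC (ε : ℝ) (z : ℂ × ℂ) :
    wd1 (rC ε) z = (starRingEnd ℂ) z.1 - 2 * z.1 * (starRingEnd ℂ) z.2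
      + (starRingEnd ℂ) z.1 * z.2 * (starRingEnd ℂ) z.2 :=
  (WP_var1 ε z.1 z.2).wd_eq

theorem wd2_rC (ε : ℝ) (z : ℂ × ℂ) :
    wd2 (rC ε) z = -(starRingEnd ℂ) z.1 ^ 2
      + z.1 * (starRingEnd ℂ) z.1 * (starRingEnd ℂ) z.2
      + 2 * (starRingEnd ℂ) z.2 - 2 * z.2 * (starRingEnd ℂ) z.2 ^ 2 :=
  (WP_var2 ε z.1 z.2).wd_eq

theorem WP_G1_var1 (ε : ℝ) (s p : ℂ) :
    WP (fun w => wd1 (rC ε) (w, p)) s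
      (-2 * (starRingEnd ℂ) p) (1 + p * (starRingEnd ℂ) p) := by
  have t : WP (fun w => (starRingEnd ℂ) w - 2 * w * (starRingEnd ℂ) p
        + (starRingEnd ℂ) w * p * (starRingEnd ℂ) p) s
      (-2 * (starRingEnd ℂ) p) (1 + p * (starRingEnd ℂ) p) :=
    (((WP_conj s).sub (((WP_id s).const_mul 2).mul_const ((starRingEnd ℂ) p))).add
      (((WP_conj s).mul_const p).mul_const ((starRingEnd ℂ) p))).congr_ab (by ring) (by ring)
  exact t.congr (fun w => (wd1_rC ε (w, p)).symm)

theorem WP_G1_var2 (ε : ℝ) (s p : ℂ) :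
    WP (fun w => wd1 (rC ε) (s, w)) p
      ((starRingEnd ℂ) s * (starRingEnd ℂ) p) (-2 * s + (starRingEnd ℂ) s * p) := by
  have t : WP (fun w => (starRingEnd ℂ) s - 2 * s * (starRingEnd ℂ) w
        + (starRingEnd ℂ) s * w * (starRingEnd ℂ) w) p
      ((starRingEnd ℂ) s * (starRingEnd ℂ) p) (-2 * s + (starRingEnd ℂ) s * p) :=
    (((WP_const p ((starRingEnd ℂ) s)).sub ((WP_conj p).const_mul (2 * s))).add
      ((((WP_id p).const_mul ((starRingEnd ℂ) s)).mul (WP_conj p)))).congr_ab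
      (by ring) (by ring)
  exact t.congr (fun w => (wd1_rC ε (s, w)).symm)

theorem WP_G2_var1 (ε : ℝ) (s p : ℂ) :
    WP (fun w => wd2 (rC ε) (w, p)) s
      ((starRingEnd ℂ) s * (starRingEnd ℂ) p)
      (-2 * (starRingEnd ℂ) s + s * (starRingEnd ℂ) p) := by
  have t : WP (fun w => -(starRingEnd ℂ) w ^ 2
        + w * (starRingEnd ℂ) w * (starRingEnd ℂ) p
        + 2 * (starRingEnd ℂ) p - 2 * p * (starRingEnd ℂ) p ^ 2) s
      ((starRingEnd ℂ) s * (starRingEnd ℂ) p)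
      (-2 * (starRingEnd ℂ) s + s * (starRingEnd ℂ) p) :=
    ((((WP_conj s).pow2.neg.add
        (((WP_id s).mul (WP_conj s)).mul_const ((starRingEnd ℂ) p))).add
      (WP_const s (2 * (starRingEnd ℂ) p))).sub
      (WP_const s (2 * p * (starRingEnd ℂ) p ^ 2))).congr_ab (by ring) (by ring)
  exact t.congr (fun w => (wd2_rC ε (w, p)).symm)

theorem WP_G2_var2 (ε : ℝ) (s p : ℂ) :
    WP (fun w => wd2 (rC ε) (s, w)) p
      (-2 * (starRingEnd ℂ) p ^ 2)
      (s * (starRingEnd ℂ) s + 2 - 4 * p * (starRingEnd ℂ) p) := by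
  have t : WP (fun w => -(starRingEnd ℂ) s ^ 2
        + s * (starRingEnd ℂ) s * (starRingEnd ℂ) w
        + 2 * (starRingEnd ℂ) w - 2 * w * (starRingEnd ℂ) w ^ 2) p
      (-2 * (starRingEnd ℂ) p ^ 2)
      (s * (starRingEnd ℂ) s + 2 - 4 * p * (starRingEnd ℂ) p) :=
    ((((WP_const p (-(starRingEnd ℂ) s ^ 2)).add
        ((WP_conj p).const_mul (s * (starRingEnd ℂ) s))).add
      ((WP_conj p).const_mul 2)).sub
      (((WP_id p).const_mul 2).mul (WP_conj p).pow2)).congr_ab (by ring) (by ring)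
  exact t.congr (fun w => (wd2_rC ε (s, w)).symm)

/-! ### Boundary description -/

theorem Dfun_continuous (ε : ℝ) :
    Continuous (fun sp : ℂ × ℂ =>
      Real.sqrt (‖sp.1 - (starRingEnd ℂ) sp.1 * sp.2‖ ^ 2 + ε)
        + ‖sp.2‖ ^ 2) := by
  apply Continuous.add
  · apply Real.continuous_sqrt.comp
    apply Continuous.add _ continuous_const
    exact (continuous_norm.comp
      (continuous_fst.sub ((Complex.continuous_conj.comp continuous_fst).mul continuous_snd))).pow 2
  · exact (continuous_norm.comp continuous_snd).pow 2

theorem frontier_eq (ε : ℝ) {z : ℂ × ℂ} (h : z ∈ frontier (Dset ε)) :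
    Real.sqrt (‖z.1 - (starRingEnd ℂ) z.1 * z.2‖ ^ 2 + ε)
      + ‖z.2‖ ^ 2 = 1 := by
  have hc := Dfun_continuous ε
  have hopen : IsOpen (Dset ε) := isOpen_lt hc continuous_const
  have h1 : z ∈ closure (Dset ε) := h.1
  have h2 : z ∉ Dset ε := by
    intro hz
    exact h.2 (by rwa [hopen.interior_eq])
  have hle : Real.sqrt (‖z.1 - (starRingEnd ℂ) z.1 * z.2‖ ^ 2 + ε)
      + ‖z.2‖ ^ 2 ≤ 1 := by
    have hsub : closure (Dset ε) ⊆ {sp : ℂ × ℂ |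
        Real.sqrt (‖sp.1 - (starRingEnd ℂ) sp.1 * sp.2‖ ^ 2 + ε)
          + ‖sp.2‖ ^ 2 ≤ 1} :=
      closure_minimal (fun x hx => show _ ≤ (1:ℝ) from le_of_lt hx)
        (isClosed_le hc continuous_const)
    exact hsub h1
  exact le_antisymm hle (not_lt.1 h2)

/-! ### The core inequality -/

set_option maxHeartbeats 1000000 in
theorem core_ineq (ε : ℝ) (hε : 0 < ε) (hε1 : ε < 1) (s p lam : ℂ) (hlam : lam ≠ 0)
    (hq : 0 < 1 - Complex.normSq p)
    (hm : Complex.normSq (s - (starRingEnd ℂ) s * p)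
        = (1 - Complex.normSq p) ^ 2 - ε) :
    ((1 + p * (starRingEnd ℂ) p) *
        (lam * (-(starRingEnd ℂ) s ^ 2 + s * (starRingEnd ℂ) s * (starRingEnd ℂ) p
          + 2 * (starRingEnd ℂ) p - 2 * p * (starRingEnd ℂ) p ^ 2)) *
        (starRingEnd ℂ) (lam * (-(starRingEnd ℂ) s ^ 2 + s * (starRingEnd ℂ) s * (starRingEnd ℂ) p
          + 2 * (starRingEnd ℂ) p - 2 * p * (starRingEnd ℂ) p ^ 2))
      + (-2 * s + (starRingEnd ℂ) s * p) *
        (lam * (-(starRingEnd ℂ) s ^ 2 + s * (starRingEnd ℂ) s * (starRingEnd ℂ) p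
          + 2 * (starRingEnd ℂ) p - 2 * p * (starRingEnd ℂ) p ^ 2)) *
        (starRingEnd ℂ) (-(lam * ((starRingEnd ℂ) s - 2 * s * (starRingEnd ℂ) p
          + (starRingEnd ℂ) s * p * (starRingEnd ℂ) p)))
      + (-2 * (starRingEnd ℂ) s + s * (starRingEnd ℂ) p) *
        (-(lam * ((starRingEnd ℂ) s - 2 * s * (starRingEnd ℂ) p
          + (starRingEnd ℂ) s * p * (starRingEnd ℂ) p))) *
        (starRingEnd ℂ) (lam * (-(starRingEnd ℂ) s ^ 2 + s * (starRingEnd ℂ) s * (starRingEnd ℂ) p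
          + 2 * (starRingEnd ℂ) p - 2 * p * (starRingEnd ℂ) p ^ 2))
      + (s * (starRingEnd ℂ) s + 2 - 4 * p * (starRingEnd ℂ) p) *
        (-(lam * ((starRingEnd ℂ) s - 2 * s * (starRingEnd ℂ) p
          + (starRingEnd ℂ) s * p * (starRingEnd ℂ) p))) *
        (starRingEnd ℂ) (-(lam * ((starRingEnd ℂ) s - 2 * s * (starRingEnd ℂ) p
          + (starRingEnd ℂ) s * p * (starRingEnd ℂ) p)))).re >
    ‖(-2 * (starRingEnd ℂ) p *
        (lam * (-(starRingEnd ℂ) s ^ 2 + s * (starRingEnd ℂ) s * (starRingEnd ℂ) p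
          + 2 * (starRingEnd ℂ) p - 2 * p * (starRingEnd ℂ) p ^ 2)) *
        (lam * (-(starRingEnd ℂ) s ^ 2 + s * (starRingEnd ℂ) s * (starRingEnd ℂ) p
          + 2 * (starRingEnd ℂ) p - 2 * p * (starRingEnd ℂ) p ^ 2))
      + (starRingEnd ℂ) s * (starRingEnd ℂ) p *
        (lam * (-(starRingEnd ℂ) s ^ 2 + s * (starRingEnd ℂ) s * (starRingEnd ℂ) p
          + 2 * (starRingEnd ℂ) p - 2 * p * (starRingEnd ℂ) p ^ 2)) *
        (-(lam * ((starRingEnd ℂ) s - 2 * s * (starRingEnd ℂ) p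
          + (starRingEnd ℂ) s * p * (starRingEnd ℂ) p)))
      + (starRingEnd ℂ) s * (starRingEnd ℂ) p *
        (-(lam * ((starRingEnd ℂ) s - 2 * s * (starRingEnd ℂ) p
          + (starRingEnd ℂ) s * p * (starRingEnd ℂ) p))) *
        (lam * (-(starRingEnd ℂ) s ^ 2 + s * (starRingEnd ℂ) s * (starRingEnd ℂ) p
          + 2 * (starRingEnd ℂ) p - 2 * p * (starRingEnd ℂ) p ^ 2))
      + -2 * (starRingEnd ℂ) p ^ 2 *
        (-(lam * ((starRingEnd ℂ) s - 2 * s * (starRingEnd ℂ) p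
          + (starRingEnd ℂ) s * p * (starRingEnd ℂ) p))) *
        (-(lam * ((starRingEnd ℂ) s - 2 * s * (starRingEnd ℂ) p
          + (starRingEnd ℂ) s * p * (starRingEnd ℂ) p))))‖ := by
  set A : ℂ := (starRingEnd ℂ) s - 2 * s * (starRingEnd ℂ) p
      + (starRingEnd ℂ) s * p * (starRingEnd ℂ) p with hAdef
  set B : ℂ := -(starRingEnd ℂ) s ^ 2 + s * (starRingEnd ℂ) s * (starRingEnd ℂ) p
      + 2 * (starRingEnd ℂ) p - 2 * p * (starRingEnd ℂ) p ^ 2 with hBdef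
  set ρ : ℝ := Complex.normSq p with hρdef
  set m : ℝ := Complex.normSq (s - (starRingEnd ℂ) s * p) with hmdef
  set q : ℝ := 1 - ρ with hqdef
  set R : ℝ := ((s - (starRingEnd ℂ) s * p) ^ 2 * (starRingEnd ℂ) p).re with hRdef
  set Wc : ℂ := 2 * ((s - (starRingEnd ℂ) s * p) * ((starRingEnd ℂ) s - s * (starRingEnd ℂ) p)
        + 2 * (ε : ℂ)) * (starRingEnd ℂ) p
      - ((starRingEnd ℂ) s - s * (starRingEnd ℂ) p) ^ 2
      - (s - (starRingEnd ℂ) s * p) ^ 2 * (starRingEnd ℂ) p ^ 2 with hWdef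
  have hρnn : 0 ≤ ρ := by rw [hρdef]; exact Complex.normSq_nonneg p
  have hmn : 0 ≤ m := by rw [hmdef]; exact Complex.normSq_nonneg _
  -- coercion identities
  have hρc : ((ρ : ℝ) : ℂ) = p * (starRingEnd ℂ) p := by
    rw [hρdef]; exact (Complex.mul_conj p).symm
  have hmc : ((m : ℝ) : ℂ)
      = (s - (starRingEnd ℂ) s * p) * ((starRingEnd ℂ) s - s * (starRingEnd ℂ) p) := by
    rw [hmdef, ← Complex.mul_conj]
    simp only [map_sub, map_mul, Complex.conj_conj]
  have hqc : ((q : ℝ) : ℂ) = 1 - p * (starRingEnd ℂ) p := by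
    rw [hqdef]; push_cast; rw [hρc]
  have hRc : ((R : ℝ) : ℂ)
      = ((s - (starRingEnd ℂ) s * p) ^ 2 * (starRingEnd ℂ) p
        + ((starRingEnd ℂ) s - s * (starRingEnd ℂ) p) ^ 2 * p) / 2 := by
    rw [hRdef]
    have h2 := Complex.add_conj ((s - (starRingEnd ℂ) s * p) ^ 2 * (starRingEnd ℂ) p)
    simp only [map_mul, map_pow, map_sub, Complex.conj_conj] at h2
    push_cast at h2 ⊢
    linear_combination (-1/2 : ℂ) * h2
  have hlc : ((Complex.normSq lam : ℝ) : ℂ) = lam * (starRingEnd ℂ) lam :=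
    (Complex.mul_conj lam).symm
  have hεc : (ε : ℂ) = (1 - p * (starRingEnd ℂ) p) ^ 2
      - (s - (starRingEnd ℂ) s * p) * ((starRingEnd ℂ) s - s * (starRingEnd ℂ) p) := by
    have h1 : ((m : ℝ) : ℂ) = ((q ^ 2 - ε : ℝ) : ℂ) := congrArg Complex.ofReal hm
    rw [hmc] at h1
    push_cast at h1
    rw [hqc] at h1
    linear_combination h1
  -- the two key complex identities
  have hc1 : ((q : ℝ) : ℂ) ^ 2 *
      ((1 + p * (starRingEnd ℂ) p) * (lam * B) * (starRingEnd ℂ) (lam * B)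
        + (-2 * s + (starRingEnd ℂ) s * p) * (lam * B) * (starRingEnd ℂ) (-(lam * A))
        + (-2 * (starRingEnd ℂ) s + s * (starRingEnd ℂ) p) * (-(lam * A)) * (starRingEnd ℂ) (lam * B)
        + (s * (starRingEnd ℂ) s + 2 - 4 * p * (starRingEnd ℂ) p) * (-(lam * A)) *
            (starRingEnd ℂ) (-(lam * A)))
      = ((2 * ε * Complex.normSq lam *
          (ρ * ((m + 2 * ε) * (1 + ρ) - 2 * R) + m * q ^ 2) : ℝ) : ℂ) := by
    rw [hAdef, hBdef]
    push_cast
    rw [hρc, hmc, hqc, hRc, hlc]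
    simp only [map_add, map_sub, map_mul, map_pow, map_neg, map_one, map_ofNat,
      Complex.conj_conj, Complex.conj_ofReal]
    rw [hεc]
    ring
  have hc2 : ((q : ℝ) : ℂ) ^ 2 *
      (-2 * (starRingEnd ℂ) p * (lam * B) * (lam * B)
        + (starRingEnd ℂ) s * (starRingEnd ℂ) p * (lam * B) * (-(lam * A))
        + (starRingEnd ℂ) s * (starRingEnd ℂ) p * (-(lam * A)) * (lam * B)
        + -2 * (starRingEnd ℂ) p ^ 2 * (-(lam * A)) * (-(lam * A)))
      = -(2 * (ε : ℂ)) * lam ^ 2 * (starRingEnd ℂ) p ^ 2 * Wc := by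
    rw [hAdef, hBdef, hWdef, hqc]
    rw [hεc]
    ring
  have hWW : Wc * (starRingEnd ℂ) Wc
      = ((((m + 2 * ε) * (1 + ρ) - 2 * R) ^ 2 - 4 * ε * q ^ 4 : ℝ) : ℂ) := by
    rw [hWdef]
    push_cast
    rw [hρc, hmc, hqc, hRc]
    simp only [map_add, map_sub, map_mul, map_pow, map_neg, map_one, map_ofNat,
      Complex.conj_conj, Complex.conj_ofReal]
    rw [hεc]
    ring
  have habsW : ‖Wc‖ ^ 2 = ((m + 2 * ε) * (1 + ρ) - 2 * R) ^ 2 - 4 * ε * q ^ 4 := by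
    rw [Complex.sq_norm]
    rw [Complex.mul_conj] at hWW
    exact_mod_cast hWW
  -- positivity facts
  have habsp : ‖p‖ ^ 2 = ρ := by rw [hρdef]; exact Complex.sq_norm p
  have hT : 0 < (m + 2 * ε) * (1 + ρ) - 2 * R := by
    have h1 : R ≤ m * ‖p‖ := by
      have h2 := Complex.re_le_norm ((s - (starRingEnd ℂ) s * p) ^ 2 * (starRingEnd ℂ) p)
      rw [norm_mul, norm_pow, Complex.norm_conj, Complex.sq_norm, ← hmdef] at h2
      rw [hRdef]
      exact h2
    have h2 : 2 * ‖p‖ ≤ 1 + ρ := by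
      nlinarith [sq_nonneg (‖p‖ - 1)]
    nlinarith [mul_le_mul_of_nonneg_left h2 hmn, h1, hε, hρnn]
  have hmρ : 0 < m + ρ := by
    by_contra h
    push_neg at h
    have hm0 : m = 0 := le_antisymm (by nlinarith) hmn
    have hρ0 : ρ = 0 := le_antisymm (by nlinarith) hρnn
    have hq1 : q = 1 := by rw [hqdef, hρ0]; ring
    rw [hm0, hq1] at hm
    norm_num at hm
    linarith
  have hgsq : (ρ * ((m + 2 * ε) * (1 + ρ) - 2 * R) + m * q ^ 2) ^ 2
      - (ρ * ‖Wc‖) ^ 2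
      = m ^ 2 * q ^ 4 + 2 * ρ * ((m + 2 * ε) * (1 + ρ) - 2 * R) * m * q ^ 2
        + 4 * ε * ρ ^ 2 * q ^ 4 := by
    rw [mul_pow, habsW]; ring
  have hg : 0 < ρ * ((m + 2 * ε) * (1 + ρ) - 2 * R) + m * q ^ 2 := by
    rcases eq_or_lt_of_le hmn with hm0 | hmpos
    · have hρpos : 0 < ρ := by nlinarith
      nlinarith [mul_pos hρpos hT]
    · nlinarith [mul_nonneg hρnn hT.le, mul_pos hmpos (mul_pos hq hq)]
  have hcore : ρ * ‖Wc‖ < ρ * ((m + 2 * ε) * (1 + ρ) - 2 * R) + m * q ^ 2 := by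
    apply lt_of_pow_lt_pow_left₀ 2 hg.le
    have hrhs : 0 < (ρ * ((m + 2 * ε) * (1 + ρ) - 2 * R) + m * q ^ 2) ^ 2
        - (ρ * ‖Wc‖) ^ 2 := by
      rcases eq_or_lt_of_le hmn with hm0 | hmpos
      · have hρpos : 0 < ρ := by nlinarith
        nlinarith [hgsq, mul_pos (mul_pos hε (mul_pos hρpos hρpos)) (pow_pos hq 4),
          mul_nonneg (mul_nonneg hρnn hT.le) (mul_nonneg hmn (sq_nonneg q)),
          mul_nonneg (mul_nonneg hmn hmn) (pow_pos hq 4).le]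
      · nlinarith [hgsq, mul_pos (mul_pos hmpos hmpos) (pow_pos hq 4),
          mul_nonneg (mul_nonneg hρnn hT.le) (mul_nonneg hmn (sq_nonneg q)),
          mul_nonneg (mul_nonneg hε.le (sq_nonneg ρ)) (pow_pos hq 4).le]
    linarith
  -- extract the real statements
  have hre : q ^ 2 *
      ((1 + p * (starRingEnd ℂ) p) * (lam * B) * (starRingEnd ℂ) (lam * B)
        + (-2 * s + (starRingEnd ℂ) s * p) * (lam * B) * (starRingEnd ℂ) (-(lam * A))
        + (-2 * (starRingEnd ℂ) s + s * (starRingEnd ℂ) p) * (-(lam * A)) * (starRingEnd ℂ) (lam * B)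
        + (s * (starRingEnd ℂ) s + 2 - 4 * p * (starRingEnd ℂ) p) * (-(lam * A)) *
            (starRingEnd ℂ) (-(lam * A))).re
      = 2 * ε * Complex.normSq lam *
          (ρ * ((m + 2 * ε) * (1 + ρ) - 2 * R) + m * q ^ 2) := by
    have h3 := congrArg Complex.re hc1
    rw [show ((q : ℝ) : ℂ) ^ 2 = ((q ^ 2 : ℝ) : ℂ) by push_cast; ring] at h3
    rwa [Complex.re_ofReal_mul, Complex.ofReal_re] at h3
  have habs : q ^ 2 * ‖
      (-2 * (starRingEnd ℂ) p * (lam * B) * (lam * B)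
        + (starRingEnd ℂ) s * (starRingEnd ℂ) p * (lam * B) * (-(lam * A))
        + (starRingEnd ℂ) s * (starRingEnd ℂ) p * (-(lam * A)) * (lam * B)
        + -2 * (starRingEnd ℂ) p ^ 2 * (-(lam * A)) * (-(lam * A)))‖
      = 2 * ε * Complex.normSq lam * (ρ * ‖Wc‖) := by
    have h3 := congrArg (‖·‖) hc2
    simp only [norm_mul, norm_pow, norm_neg, Complex.norm_conj, Complex.norm_real, Real.norm_eq_abs,
      Complex.sq_norm, _root_.sq_abs, Complex.norm_two, Complex.normSq_ofReal] at h3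
    rw [_root_.abs_of_pos hε] at h3
    rw [← hρdef] at h3
    linear_combination h3
  -- conclude
  have hpos : 0 < 2 * ε * Complex.normSq lam :=
    mul_pos (by linarith) (Complex.normSq_pos.mpr hlam)
  have final := mul_lt_mul_of_pos_left hcore hpos
  rw [← hre, ← habs] at final
  exact (mul_lt_mul_iff_right₀ (by positivity : (0:ℝ) < q ^ 2)).mp final

set_option maxHeartbeats 1000000 in
theorem stmt16 (ε : ℝ) (hε : 0 < ε) (hε1 : ε < 1) :
    ∀ z₀ ∈ frontier (Dset ε), ∀ X : ℂ × ℂ, X ≠ 0 →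
      wd1 (rC ε) z₀ * X.1 + wd2 (rC ε) z₀ * X.2 = 0 →
      (wdBar1 (wd1 (rC ε)) z₀ * X.1 * (starRingEnd ℂ) X.1
        + wdBar2 (wd1 (rC ε)) z₀ * X.1 * (starRingEnd ℂ) X.2
        + wdBar1 (wd2 (rC ε)) z₀ * X.2 * (starRingEnd ℂ) X.1
        + wdBar2 (wd2 (rC ε)) z₀ * X.2 * (starRingEnd ℂ) X.2).re >
      ‖wd1 (wd1 (rC ε)) z₀ * X.1 * X.1
        + wd2 (wd1 (rC ε)) z₀ * X.1 * X.2
        + wd1 (wd2 (rC ε)) z₀ * X.2 * X.1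
        + wd2 (wd2 (rC ε)) z₀ * X.2 * X.2‖ := by
  intro z₀ hz₀ X hX htan
  obtain ⟨s, p⟩ := z₀
  obtain ⟨X₁, X₂⟩ := X
  dsimp only at htan ⊢
  -- boundary facts
  have hfr := frontier_eq ε hz₀
  dsimp only at hfr
  rw [Complex.sq_norm, Complex.sq_norm] at hfr
  have hmε : 0 < Complex.normSq (s - (starRingEnd ℂ) s * p) + ε :=
    add_pos_of_nonneg_of_pos (Complex.normSq_nonneg _) hε
  have hsqrt : Real.sqrt (Complex.normSq (s - (starRingEnd ℂ) s * p) + ε)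
      = 1 - Complex.normSq p := by linarith
  have hq : 0 < 1 - Complex.normSq p := by
    rw [← hsqrt]; exact Real.sqrt_pos.2 hmε
  have hm : Complex.normSq (s - (starRingEnd ℂ) s * p)
      = (1 - Complex.normSq p) ^ 2 - ε := by
    have h2 := Real.sq_sqrt hmε.le
    rw [hsqrt] at h2
    linarith
  -- rewrite the derivatives
  rw [wd1_rC ε (s, p), wd2_rC ε (s, p)] at htan
  dsimp only at htan
  rw [show wdBar1 (wd1 (rC ε)) (s, p) = 1 + p * (starRingEnd ℂ) p from
        (WP_G1_var1 ε s p).wdBar_eq,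
      show wdBar2 (wd1 (rC ε)) (s, p) = -2 * s + (starRingEnd ℂ) s * p from
        (WP_G1_var2 ε s p).wdBar_eq,
      show wdBar1 (wd2 (rC ε)) (s, p) = -2 * (starRingEnd ℂ) s + s * (starRingEnd ℂ) p from
        (WP_G2_var1 ε s p).wdBar_eq,
      show wdBar2 (wd2 (rC ε)) (s, p) = s * (starRingEnd ℂ) s + 2 - 4 * p * (starRingEnd ℂ) p from
        (WP_G2_var2 ε s p).wdBar_eq,
      show wd1 (wd1 (rC ε)) (s, p) = -2 * (starRingEnd ℂ) p from
        (WP_G1_var1 ε s p).wd_eq,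
      show wd2 (wd1 (rC ε)) (s, p) = (starRingEnd ℂ) s * (starRingEnd ℂ) p from
        (WP_G1_var2 ε s p).wd_eq,
      show wd1 (wd2 (rC ε)) (s, p) = (starRingEnd ℂ) s * (starRingEnd ℂ) p from
        (WP_G2_var1 ε s p).wd_eq,
      show wd2 (wd2 (rC ε)) (s, p) = -2 * (starRingEnd ℂ) p ^ 2 from
        (WP_G2_var2 ε s p).wd_eq]
  -- the tangent vector is proportional to (B, -A)
  have hABne : ¬(((starRingEnd ℂ) s - 2 * s * (starRingEnd ℂ) p
        + (starRingEnd ℂ) s * p * (starRingEnd ℂ) p) = 0 ∧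
      (-(starRingEnd ℂ) s ^ 2 + s * (starRingEnd ℂ) s * (starRingEnd ℂ) p
        + 2 * (starRingEnd ℂ) p - 2 * p * (starRingEnd ℂ) p ^ 2) = 0) := by
    rintro ⟨hA0, hB0⟩
    have hu0 : s - (starRingEnd ℂ) s * p = 0 := by
      have hconj : (starRingEnd ℂ) (s - (starRingEnd ℂ) s * p)
          = (s - (starRingEnd ℂ) s * p) * (starRingEnd ℂ) p := by
        simp only [map_sub, map_mul, Complex.conj_conj]
        linear_combination hA0
      have hns := congrArg Complex.normSq hconj
      rw [Complex.normSq_conj, Complex.normSq_mul, Complex.normSq_conj] at hns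
      have : Complex.normSq (s - (starRingEnd ℂ) s * p) * (1 - Complex.normSq p) = 0 := by
        linear_combination hns
      rcases mul_eq_zero.mp this with h | h
      · exact Complex.normSq_eq_zero.mp h
      · exact absurd h (by linarith)
    have hp0 : p = 0 := by
      have hid : ((1 : ℂ) - p * (starRingEnd ℂ) p) *
          (-(starRingEnd ℂ) s ^ 2 + s * (starRingEnd ℂ) s * (starRingEnd ℂ) p
            + 2 * (starRingEnd ℂ) p - 2 * p * (starRingEnd ℂ) p ^ 2)
          = -(starRingEnd ℂ) (s - (starRingEnd ℂ) s * p) ^ 2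
            - (s - (starRingEnd ℂ) s * p) * (starRingEnd ℂ) (s - (starRingEnd ℂ) s * p)
              * (starRingEnd ℂ) p
            + 2 * (starRingEnd ℂ) p * (1 - p * (starRingEnd ℂ) p) ^ 2 := by
        simp only [map_sub, map_mul, Complex.conj_conj]
        ring
      rw [hB0, hu0] at hid
      simp only [mul_zero, zero_mul, map_zero, neg_zero, zero_pow, zero_sub, zero_add,
        ne_eq, OfNat.ofNat_ne_zero, not_false_eq_true] at hid
      -- hid : 0 = 2 * conj p * (1 - p * conj p)^2  (up to simp normal form)
      have hqc : ((1 : ℂ) - p * (starRingEnd ℂ) p) ≠ 0 := by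
        rw [Complex.mul_conj]
        intro h
        have := congrArg Complex.re h
        simp at this
        linarith
      have h2 : (starRingEnd ℂ) p = 0 := by
        by_contra hc
        apply hqc
        have h3 : 2 * (starRingEnd ℂ) p * ((1:ℂ) - p * (starRingEnd ℂ) p) ^ 2 = 0 := by
          linear_combination -hid
        rcases mul_eq_zero.mp h3 with h | h
        · rcases mul_eq_zero.mp h with h' | h'
          · norm_num at h'
          · exact absurd h' hc
        · exact pow_eq_zero_iff (by norm_num) |>.mp h
      simpa using congrArg (starRingEnd ℂ) h2
    have hs0 : s = 0 := by
      have := hu0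
      rw [hp0] at this
      simpa using this
    rw [hs0, hp0] at hm
    simp [Complex.normSq] at hm
    linarith
  obtain ⟨lam, hlam, hX1, hX2⟩ : ∃ lam : ℂ, lam ≠ 0 ∧
      X₁ = lam * (-(starRingEnd ℂ) s ^ 2 + s * (starRingEnd ℂ) s * (starRingEnd ℂ) p
        + 2 * (starRingEnd ℂ) p - 2 * p * (starRingEnd ℂ) p ^ 2) ∧
      X₂ = -(lam * ((starRingEnd ℂ) s - 2 * s * (starRingEnd ℂ) p
        + (starRingEnd ℂ) s * p * (starRingEnd ℂ) p)) := by
    set A : ℂ := (starRingEnd ℂ) s - 2 * s * (starRingEnd ℂ) p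
        + (starRingEnd ℂ) s * p * (starRingEnd ℂ) p with hAdef
    set B : ℂ := -(starRingEnd ℂ) s ^ 2 + s * (starRingEnd ℂ) s * (starRingEnd ℂ) p
        + 2 * (starRingEnd ℂ) p - 2 * p * (starRingEnd ℂ) p ^ 2 with hBdef
    by_cases hA0 : A = 0
    · have hB0 : B ≠ 0 := fun h => hABne ⟨hA0, h⟩
      have hX2' : X₂ = 0 := by
        rw [hA0, zero_mul, zero_add] at htan
        exact (mul_eq_zero.mp htan).resolve_left hB0
      have hX1' : X₁ ≠ 0 := by
        intro h
        exact hX (by rw [Prod.mk_eq_zero]; exact ⟨h, hX2'⟩)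
      exact ⟨X₁ / B, div_ne_zero hX1' hB0, by field_simp, by rw [hA0, hX2']; ring⟩
    · refine ⟨-X₂ / A, ?_, ?_, by field_simp⟩
      · intro h
        have hX2' : X₂ = 0 := by
          field_simp at h
          simpa using h
        have hX1' : X₁ = 0 := by
          rw [hX2', mul_zero, add_zero] at htan
          exact (mul_eq_zero.mp htan).resolve_left hA0
        exact hX (by rw [Prod.mk_eq_zero]; exact ⟨hX1', hX2'⟩)
      · have hgoal : X₁ * A = -X₂ * B := by linear_combination htan
        rw [div_mul_eq_mul_div, eq_div_iff hA0]
        exact hgoal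
  rw [hX1, hX2]
  exact core_ineq ε hε hε1 s p lam hlam hq hm
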